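/- The three elements X₁ = L_{15} + 2L_{24}, X₂ = √3·L_{35} + L_{12} − L_{45}, X₃ = √3·L_{13} + L_{14} + L_{25} of so(5) span a Lie subalgebra isomorphic to so(3); in particular the span of {X₁, X₂, X₃} is closed under the Lie bracket. -/

import Mathlib

open Matrix

attribute [local instance 100] LieRing.ofAssociativeRing
attribute [local instance 100] LieAlgebra.ofAssociativeAlgebra

/-- The standard generators `L_{ab} = E_{ab} − E_{ba}` of `𝔰𝔬(5)` (indices `0,…,4`
standing for `1,…,5`). -/
def Lgen5 (a b : Fin 5) : Matrix (Fin 5) (Fin 5) ℝ :=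
  Matrix.single a b 1 - Matrix.single b a 1

/-- `X₁ = L₁₅ + 2L₂₄`. -/
noncomputable def X₁ : Matrix (Fin 5) (Fin 5) ℝ := Lgen5 0 4 + (2 : ℝ) • Lgen5 1 3

/-- `X₂ = √3·L₃₅ + L₁₂ − L₄₅`. -/
noncomputable def X₂ : Matrix (Fin 5) (Fin 5) ℝ :=
  Real.sqrt 3 • Lgen5 2 4 + Lgen5 0 1 - Lgen5 3 4

/-- `X₃ = √3·L₁₃ + L₁₄ + L₂₅`. -/
noncomputable def X₃ : Matrix (Fin 5) (Fin 5) ℝ :=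
  Real.sqrt 3 • Lgen5 0 2 + Lgen5 0 3 + Lgen5 1 4

/-! ### Auxiliary machinery -/

lemma mulE (a b c d : Fin 5) :
    single a b (1:ℝ) * single c d 1 =
      if b = c then single a d 1 else 0 := by
  split
  · next h => subst h; simp
  · next h => exact Matrix.single_mul_single_of_ne (1:ℝ) a b _ h 1

lemma mulE3 (a b c d : Fin 3) :
    single a b (1:ℝ) * single c d 1 =
      if b = c then single a d 1 else 0 := by
  split
  · next h => subst h; simp
  · next h => exact Matrix.single_mul_single_of_ne (1:ℝ) a b _ h 1

lemma Ec (a b : Fin 5) (c : ℝ) : single a b c = c • single a b 1 := by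
  rw [Matrix.smul_single, smul_eq_mul, mul_one]

lemma Ec2 (a b : Fin 5) : single a b (2:ℝ) = (2:ℝ) • single a b 1 := Ec a b 2
lemma EcS (a b : Fin 5) :
    single a b (Real.sqrt 3) = Real.sqrt 3 • single a b 1 := Ec a b _
lemma EcS2 (a b : Fin 5) :
    single a b (Real.sqrt 3 * 2) = (Real.sqrt 3 * 2) • single a b 1 := Ec a b _
lemma Ec2S (a b : Fin 5) :
    single a b (2 * Real.sqrt 3) = (2 * Real.sqrt 3) • single a b 1 := Ec a b _

lemma sq3 : Real.sqrt 3 * Real.sqrt 3 = 3 := Real.mul_self_sqrt (by norm_num)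

lemma stdT3 (a b : Fin 3) : (single a b (1:ℝ))ᵀ = single b a 1 := by
  ext i j
  simp [Matrix.transpose_apply, Matrix.single, and_comm]

/-! ### Brackets of the `Xᵢ` -/

lemma b12 : ⁅X₁, X₂⁆ = -X₃ := by
  simp only [X₁, X₂, X₃, Lgen5, Ring.lie_def, sub_mul, mul_sub, add_mul, mul_add,
    smul_mul_assoc, mul_smul_comm, mulE, smul_smul, sq3]
  simp only [Fin.reduceEq, reduceIte, if_true, if_false, Ec2, EcS, EcS2, Ec2S,
    smul_sub, smul_add, smul_smul]
  match_scalars <;> ring_nf <;> nlinarith [sq3, Real.sqrt_nonneg 3]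

lemma b21 : ⁅X₂, X₁⁆ = X₃ := by
  have h := lie_skew X₁ X₂
  rw [b12] at h
  exact neg_injective h

lemma b23 : ⁅X₂, X₃⁆ = -X₁ := by
  simp only [X₁, X₂, X₃, Lgen5, Ring.lie_def, sub_mul, mul_sub, add_mul, mul_add,
    smul_mul_assoc, mul_smul_comm, mulE, smul_smul, sq3]
  simp only [Fin.reduceEq, reduceIte, if_true, if_false, Ec2, EcS, EcS2, Ec2S,
    smul_sub, smul_add, smul_smul]
  match_scalars <;> ring_nf <;> nlinarith [sq3, Real.sqrt_nonneg 3]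

lemma b32 : ⁅X₃, X₂⁆ = X₁ := by
  have h := lie_skew X₂ X₃
  rw [b23] at h
  exact neg_injective h

lemma b31 : ⁅X₃, X₁⁆ = -X₂ := by
  simp only [X₁, X₂, X₃, Lgen5, Ring.lie_def, sub_mul, mul_sub, add_mul, mul_add,
    smul_mul_assoc, mul_smul_comm, mulE, smul_smul, sq3]
  simp only [Fin.reduceEq, reduceIte, if_true, if_false, Ec2, EcS, EcS2, Ec2S,
    smul_sub, smul_add, smul_smul]
  match_scalars <;> ring_nf <;> nlinarith [sq3, Real.sqrt_nonneg 3]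

lemma b13 : ⁅X₁, X₃⁆ = X₂ := by
  have h := lie_skew X₃ X₁
  rw [b31] at h
  exact neg_injective h

/-! ### The span is a Lie subalgebra -/

noncomputable abbrev SS : Submodule ℝ (Matrix (Fin 5) (Fin 5) ℝ) :=
  Submodule.span ℝ ({X₁, X₂, X₃} : Set (Matrix (Fin 5) (Fin 5) ℝ))

lemma X₁_mem : X₁ ∈ SS := Submodule.subset_span (Set.mem_insert _ _)
lemma X₂_mem : X₂ ∈ SS :=
  Submodule.subset_span (Set.mem_insert_of_mem _ (Set.mem_insert _ _))
lemma X₃_mem : X₃ ∈ SS :=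
  Submodule.subset_span (Set.mem_insert_of_mem _ (Set.mem_insert_of_mem _ rfl))

lemma gen_lie_mem :
    ∀ u ∈ ({X₁, X₂, X₃} : Set (Matrix (Fin 5) (Fin 5) ℝ)),
      ∀ v ∈ ({X₁, X₂, X₃} : Set (Matrix (Fin 5) (Fin 5) ℝ)), ⁅u, v⁆ ∈ SS := by
  rintro u hu v hv
  simp only [Set.mem_insert_iff, Set.mem_singleton_iff] at hu hv
  rcases hu with rfl | rfl | rfl <;> rcases hv with rfl | rfl | rfl <;>
    first
      | (rw [lie_self]; exact zero_mem _)
      | (rw [b12]; exact neg_mem X₃_mem)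
      | (rw [b21]; exact X₃_mem)
      | (rw [b23]; exact neg_mem X₁_mem)
      | (rw [b32]; exact X₁_mem)
      | (rw [b31]; exact neg_mem X₂_mem)
      | (rw [b13]; exact X₂_mem)

lemma lieClosed : ∀ {x y : Matrix (Fin 5) (Fin 5) ℝ}, x ∈ SS → y ∈ SS → ⁅x, y⁆ ∈ SS := by
  have h1 : ∀ u ∈ ({X₁, X₂, X₃} : Set (Matrix (Fin 5) (Fin 5) ℝ)),
      ∀ {v}, v ∈ SS → ⁅u, v⁆ ∈ SS := by
    intro u hu v hv
    induction hv using Submodule.span_induction with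
    | mem w hw => exact gen_lie_mem u hu w hw
    | zero => rw [lie_zero]; exact zero_mem _
    | add x y hx hy ihx ihy => rw [lie_add]; exact add_mem ihx ihy
    | smul a x hx ih => rw [lie_smul]; exact Submodule.smul_mem _ _ ih
  intro x y hx hy
  induction hx using Submodule.span_induction with
  | mem w hw => exact h1 w hw hy
  | zero => rw [zero_lie]; exact zero_mem _
  | add a b ha hb iha ihb => rw [add_lie]; exact add_mem iha ihb
  | smul a w hw ih => rw [smul_lie]; exact Submodule.smul_mem _ _ ih

/-- The span of `X₁, X₂, X₃` as a Lie subalgebra of `𝔰𝔬(5) ⊆ gl₅(ℝ)`. -/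
noncomputable def sAlg : LieSubalgebra ℝ (Matrix (Fin 5) (Fin 5) ℝ) :=
  { Submodule.span ℝ ({X₁, X₂, X₃} : Set (Matrix (Fin 5) (Fin 5) ℝ)) with
    lie_mem' := fun hx hy => lieClosed hx hy }

/-! ### Standard basis of `𝔰𝔬(3)` -/

def Y₁ : Matrix (Fin 3) (Fin 3) ℝ := single 2 1 1 - single 1 2 1
def Y₂ : Matrix (Fin 3) (Fin 3) ℝ := single 0 2 1 - single 2 0 1
def Y₃ : Matrix (Fin 3) (Fin 3) ℝ := single 1 0 1 - single 0 1 1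

lemma yb12 : ⁅Y₁, Y₂⁆ = Y₃ := by
  simp only [Y₁, Y₂, Y₃, Ring.lie_def, sub_mul, mul_sub, mulE3]
  simp only [Fin.reduceEq, reduceIte, if_true, if_false]
  abel

lemma yb21 : ⁅Y₂, Y₁⁆ = -Y₃ := by rw [← lie_skew, yb12]

lemma yb23 : ⁅Y₂, Y₃⁆ = Y₁ := by
  simp only [Y₁, Y₂, Y₃, Ring.lie_def, sub_mul, mul_sub, mulE3]
  simp only [Fin.reduceEq, reduceIte, if_true, if_false]
  abel

lemma yb32 : ⁅Y₃, Y₂⁆ = -Y₁ := by rw [← lie_skew, yb23]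

lemma yb31 : ⁅Y₃, Y₁⁆ = Y₂ := by
  simp only [Y₁, Y₂, Y₃, Ring.lie_def, sub_mul, mul_sub, mulE3]
  simp only [Fin.reduceEq, reduceIte, if_true, if_false]
  abel

lemma yb13 : ⁅Y₁, Y₃⁆ = -Y₂ := by rw [← lie_skew, yb31]

/-! ### The linear maps `Φ`, `Ψ` -/

noncomputable def Φ : Matrix (Fin 5) (Fin 5) ℝ →ₗ[ℝ] Matrix (Fin 3) (Fin 3) ℝ where
  toFun A := (-(A 0 4)) • Y₁ + A 0 1 • Y₂ + A 0 3 • Y₃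
  map_add' A B := by
    simp only [Matrix.add_apply, neg_add, add_smul]
    module
  map_smul' c A := by
    simp only [Matrix.smul_apply, smul_eq_mul, RingHom.id_apply]
    module

noncomputable def Ψ : Matrix (Fin 3) (Fin 3) ℝ →ₗ[ℝ] Matrix (Fin 5) (Fin 5) ℝ where
  toFun B := (-(B 2 1)) • X₁ + B 0 2 • X₂ + B 1 0 • X₃
  map_add' A B := by
    simp only [Matrix.add_apply, neg_add, add_smul]
    module
  map_smul' c A := by
    simp only [Matrix.smul_apply, smul_eq_mul, RingHom.id_apply]
    module

lemma Φ_apply (A : Matrix (Fin 5) (Fin 5) ℝ) :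
    Φ A = (-(A 0 4)) • Y₁ + A 0 1 • Y₂ + A 0 3 • Y₃ := rfl

lemma Ψ_apply (B : Matrix (Fin 3) (Fin 3) ℝ) :
    Ψ B = (-(B 2 1)) • X₁ + B 0 2 • X₂ + B 1 0 • X₃ := rfl

/-! ### Entries of the generators -/

lemma X₁04 : X₁ 0 4 = 1 := by
  simp [X₁, Lgen5, Matrix.single, Matrix.add_apply, Matrix.sub_apply, Matrix.smul_apply]
lemma X₁01 : X₁ 0 1 = 0 := by
  simp [X₁, Lgen5, Matrix.single, Matrix.add_apply, Matrix.sub_apply, Matrix.smul_apply]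
lemma X₁03 : X₁ 0 3 = 0 := by
  simp [X₁, Lgen5, Matrix.single, Matrix.add_apply, Matrix.sub_apply, Matrix.smul_apply]
lemma X₂04 : X₂ 0 4 = 0 := by
  simp [X₂, Lgen5, Matrix.single, Matrix.add_apply, Matrix.sub_apply, Matrix.smul_apply]
lemma X₂01 : X₂ 0 1 = 1 := by
  simp [X₂, Lgen5, Matrix.single, Matrix.add_apply, Matrix.sub_apply, Matrix.smul_apply]
lemma X₂03 : X₂ 0 3 = 0 := by
  simp [X₂, Lgen5, Matrix.single, Matrix.add_apply, Matrix.sub_apply, Matrix.smul_apply]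
lemma X₃04 : X₃ 0 4 = 0 := by
  simp [X₃, Lgen5, Matrix.single, Matrix.add_apply, Matrix.sub_apply, Matrix.smul_apply]
lemma X₃01 : X₃ 0 1 = 0 := by
  simp [X₃, Lgen5, Matrix.single, Matrix.add_apply, Matrix.sub_apply, Matrix.smul_apply]
lemma X₃03 : X₃ 0 3 = 1 := by
  simp [X₃, Lgen5, Matrix.single, Matrix.add_apply, Matrix.sub_apply, Matrix.smul_apply]

lemma Y₁21 : Y₁ 2 1 = 1 := by simp [Y₁, Matrix.single, Matrix.sub_apply]
lemma Y₁02 : Y₁ 0 2 = 0 := by simp [Y₁, Matrix.single, Matrix.sub_apply]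
lemma Y₁10 : Y₁ 1 0 = 0 := by simp [Y₁, Matrix.single, Matrix.sub_apply]
lemma Y₂21 : Y₂ 2 1 = 0 := by simp [Y₂, Matrix.single, Matrix.sub_apply]
lemma Y₂02 : Y₂ 0 2 = 1 := by simp [Y₂, Matrix.single, Matrix.sub_apply]
lemma Y₂10 : Y₂ 1 0 = 0 := by simp [Y₂, Matrix.single, Matrix.sub_apply]
lemma Y₃21 : Y₃ 2 1 = 0 := by simp [Y₃, Matrix.single, Matrix.sub_apply]
lemma Y₃02 : Y₃ 0 2 = 0 := by simp [Y₃, Matrix.single, Matrix.sub_apply]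
lemma Y₃10 : Y₃ 1 0 = 1 := by simp [Y₃, Matrix.single, Matrix.sub_apply]

lemma pX1 : Φ X₁ = -Y₁ := by rw [Φ_apply, X₁04, X₁01, X₁03]; module
lemma pX2 : Φ X₂ = Y₂ := by rw [Φ_apply, X₂04, X₂01, X₂03]; module
lemma pX3 : Φ X₃ = Y₃ := by rw [Φ_apply, X₃04, X₃01, X₃03]; module

lemma qY1 : Ψ Y₁ = -X₁ := by rw [Ψ_apply, Y₁21, Y₁02, Y₁10]; module
lemma qY2 : Ψ Y₂ = X₂ := by rw [Ψ_apply, Y₂21, Y₂02, Y₂10]; module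
lemma qY3 : Ψ Y₃ = X₃ := by rw [Ψ_apply, Y₃21, Y₃02, Y₃10]; module

/-! ### `Φ` lands in skew matrices, `Ψ` lands in the span -/

lemma Y₁_skew : Y₁ᵀ = -Y₁ := by
  rw [Y₁, Matrix.transpose_sub, stdT3, stdT3]; module

lemma Y₂_skew : Y₂ᵀ = -Y₂ := by
  rw [Y₂, Matrix.transpose_sub, stdT3, stdT3]; module

lemma Y₃_skew : Y₃ᵀ = -Y₃ := by
  rw [Y₃, Matrix.transpose_sub, stdT3, stdT3]; module

lemma Φ_mem_skew (A : Matrix (Fin 5) (Fin 5) ℝ) :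
    Φ A ∈ skewAdjointMatricesLieSubalgebra (1 : Matrix (Fin 3) (Fin 3) ℝ) := by
  rw [mem_skewAdjointMatricesLieSubalgebra, mem_skewAdjointMatricesSubmodule]
  show (Φ A)ᵀ * 1 = 1 * -(Φ A)
  rw [mul_one, one_mul, Φ_apply]
  simp only [Matrix.transpose_add, Matrix.transpose_smul, Y₁_skew, Y₂_skew, Y₃_skew]
  module

lemma Ψ_mem_span (B : Matrix (Fin 3) (Fin 3) ℝ) : Ψ B ∈ SS := by
  rw [Ψ_apply]
  exact add_mem (add_mem (Submodule.smul_mem _ _ X₁_mem) (Submodule.smul_mem _ _ X₂_mem))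
    (Submodule.smul_mem _ _ X₃_mem)

/-! ### Mutually inverse -/

lemma psi_phi : ∀ x ∈ SS, Ψ (Φ x) = x := by
  intro x hx
  induction hx using Submodule.span_induction with
  | mem w hw =>
    simp only [Set.mem_insert_iff, Set.mem_singleton_iff] at hw
    rcases hw with rfl | rfl | rfl
    · rw [pX1, map_neg, qY1, neg_neg]
    · rw [pX2, qY2]
    · rw [pX3, qY3]
  | zero => simp
  | add a b ha hb iha ihb => rw [map_add, map_add, iha, ihb]
  | smul c w hw ih => rw [LinearMap.map_smul, LinearMap.map_smul, ih]

lemma phi_psi (B : Matrix (Fin 3) (Fin 3) ℝ) (hB : Bᵀ = -B) : Φ (Ψ B) = B := by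
  have k : ∀ i j, B j i = -B i j := by
    intro i j
    have := congrFun (congrFun hB i) j
    simpa [Matrix.transpose_apply, Matrix.neg_apply] using this
  rw [Ψ_apply, map_add, map_add, LinearMap.map_smul, LinearMap.map_smul, LinearMap.map_smul,
    pX1, pX2, pX3]
  ext i j
  fin_cases i <;> fin_cases j <;>
    simp [Y₁, Y₂, Y₃, Matrix.single, Matrix.add_apply, Matrix.sub_apply,
      Matrix.smul_apply, Matrix.neg_apply] <;>
    first
      | linarith [k 0 0]
      | linarith [k 1 1]
      | linarith [k 2 2]
      | linarith [k 0 1]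
      | linarith [k 0 2]
      | linarith [k 1 2]

/-! ### `Φ` preserves brackets on the span -/

lemma phi_lie : ∀ x ∈ SS, ∀ y ∈ SS, Φ ⁅x, y⁆ = ⁅Φ x, Φ y⁆ := by
  have h1 : ∀ u ∈ ({X₁, X₂, X₃} : Set (Matrix (Fin 5) (Fin 5) ℝ)),
      ∀ v ∈ ({X₁, X₂, X₃} : Set (Matrix (Fin 5) (Fin 5) ℝ)), Φ ⁅u, v⁆ = ⁅Φ u, Φ v⁆ := by
    intro u hu v hv
    simp only [Set.mem_insert_iff, Set.mem_singleton_iff] at hu hv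
    rcases hu with rfl | rfl | rfl <;> rcases hv with rfl | rfl | rfl <;>
      simp [lie_self, b12, b21, b23, b32, b31, b13, pX1, pX2, pX3,
        yb12, yb21, yb23, yb32, yb31, yb13, map_neg]
  have h2 : ∀ u ∈ ({X₁, X₂, X₃} : Set (Matrix (Fin 5) (Fin 5) ℝ)),
      ∀ v ∈ SS, Φ ⁅u, v⁆ = ⁅Φ u, Φ v⁆ := by
    intro u hu v hv
    induction hv using Submodule.span_induction with
    | mem w hw => exact h1 u hu w hw
    | zero => simp
    | add a b ha hb iha ihb => rw [lie_add, map_add, iha, ihb, map_add, lie_add]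
    | smul c w hw ih => rw [lie_smul, LinearMap.map_smul, ih, LinearMap.map_smul, lie_smul]
  intro x hx y hy
  induction hx using Submodule.span_induction with
  | mem w hw => exact h2 w hw y hy
  | zero => simp
  | add a b ha hb iha ihb => rw [add_lie, map_add, iha, ihb, map_add, add_lie]
  | smul c w hw ih => rw [smul_lie, LinearMap.map_smul, ih, LinearMap.map_smul, smul_lie]

/-! ### Assembling the equivalence -/

lemma mem_S_of_mem_sAlg {x : Matrix (Fin 5) (Fin 5) ℝ} (h : x ∈ sAlg) : x ∈ SS := h

lemma skew_of_mem {B : Matrix (Fin 3) (Fin 3) ℝ}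
    (h : B ∈ skewAdjointMatricesLieSubalgebra (1 : Matrix (Fin 3) (Fin 3) ℝ)) : Bᵀ = -B := by
  rw [mem_skewAdjointMatricesLieSubalgebra, mem_skewAdjointMatricesSubmodule] at h
  have h' : Bᵀ * 1 = 1 * -B := h
  rwa [mul_one, one_mul] at h'

noncomputable def theEquiv :
    sAlg ≃ₗ⁅ℝ⁆ ↥(skewAdjointMatricesLieSubalgebra (1 : Matrix (Fin 3) (Fin 3) ℝ)) where
  toFun x := ⟨Φ x.1, Φ_mem_skew x.1⟩
  map_add' x y := Subtype.ext (Φ.map_add x.1 y.1)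
  map_smul' c x := Subtype.ext (Φ.map_smul c x.1)
  map_lie' {x y} := Subtype.ext (phi_lie x.1 (mem_S_of_mem_sAlg x.2) y.1 (mem_S_of_mem_sAlg y.2))
  invFun B := ⟨Ψ B.1, Ψ_mem_span B.1⟩
  left_inv x := Subtype.ext (psi_phi x.1 (mem_S_of_mem_sAlg x.2))
  right_inv B := Subtype.ext (phi_psi B.1 (skew_of_mem B.2))

/-- The elements `X₁, X₂, X₃` of `𝔰𝔬(5)` span a Lie subalgebra isomorphic to
`𝔰𝔬(3)`; in particular their span is closed under the Lie bracket. -/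
theorem stmt8 :
    ∃ s : LieSubalgebra ℝ (Matrix (Fin 5) (Fin 5) ℝ),
      s.toSubmodule = Submodule.span ℝ {X₁, X₂, X₃} ∧
      Nonempty (s ≃ₗ⁅ℝ⁆
        ↥(skewAdjointMatricesLieSubalgebra (1 : Matrix (Fin 3) (Fin 3) ℝ))) := by
  exact ⟨sAlg, rfl, ⟨theEquiv⟩⟩
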